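/- In a path of n = 3k cells where maroon cells obey the constraints that no three consecutive cells are maroon, the two endpoints' first (and last) two cells are not both maroon, and every maroon cell has a neighbor that is blue/green/yellow/orange, the maximum possible number of maroon cells is 2k, attained when the cells follow the repeating pattern (maroon, blue-or-green, maroon) and the number of blue/green cells is k. For n = 3k+1 the maximum is 2k, and for n = 3k+2 the maximum is 2k+1. -/
import Mathlib


/-- A sequence of `n` cells over the alphabet `Fin 3` (`0` = maroon, `1` = supported
(blue/green/yellow/orange), `2` = other) obeying the constraints: no three consecutive
maroon cells, the first two cells not both maroon, the last two cells not both maroon,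
and every maroon cell has a neighbour which is supported. -/
def ValidSeq (n : ℕ) (f : ℕ → Fin 3) : Prop :=
  (∀ l, l + 2 < n → ¬ (f l = 0 ∧ f (l + 1) = 0 ∧ f (l + 2) = 0)) ∧
  (2 ≤ n → ¬ (f 0 = 0 ∧ f 1 = 0)) ∧
  (2 ≤ n → ¬ (f (n - 2) = 0 ∧ f (n - 1) = 0)) ∧
  (∀ l, l < n → f l = 0 →
    (1 ≤ l ∧ f (l - 1) = 1) ∨ (l + 1 < n ∧ f (l + 1) = 1))

/-- The number of maroon cells among the first `n` entries. -/
def maroonCount (n : ℕ) (f : ℕ → Fin 3) : ℕ :=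
  ((Finset.range n).filter fun l => f l = 0).card

/- ## Auxiliary machinery -/

/-- Indicator of a maroon cell. -/
def ind (f : ℕ → Fin 3) (l : ℕ) : ℕ := if f l = 0 then 1 else 0

lemma maroonCount_eq_sum (n : ℕ) (f : ℕ → Fin 3) :
    maroonCount n f = ∑ l ∈ Finset.range n, ind f l := by
  rw [maroonCount, Finset.card_filter]; rfl

lemma triple_le (f : ℕ → Fin 3) {l : ℕ}
    (h : ¬ (f l = 0 ∧ f (l + 1) = 0 ∧ f (l + 2) = 0)) :
    ind f l + ind f (l + 1) + ind f (l + 2) ≤ 2 := by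
  unfold ind; split_ifs <;> simp_all

lemma pair_le (f : ℕ → Fin 3) {a b : ℕ}
    (h : ¬ (f a = 0 ∧ f b = 0)) : ind f a + ind f b ≤ 1 := by
  unfold ind; split_ifs <;> simp_all

lemma sum_pair (g : ℕ → ℕ) (a : ℕ) :
    ∑ l ∈ Finset.Ico a (a + 2), g l = g a + g (a + 1) := by
  rw [show a + 2 = (a + 1) + 1 from rfl,
    Finset.sum_Ico_succ_top (by omega), Finset.sum_Ico_succ_top (by omega)]
  simp

lemma sum_triple (g : ℕ → ℕ) (a : ℕ) :
    ∑ l ∈ Finset.Ico a (a + 3), g l = g a + g (a + 1) + g (a + 2) := by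
  rw [Finset.sum_Ico_eq_sum_range]
  simp [Finset.sum_range_succ, Nat.add_assoc]

lemma blocksum (g : ℕ → ℕ) (a n : ℕ)
    (h : ∀ l, l + 2 < n → g l + g (l + 1) + g (l + 2) ≤ 2) :
    ∀ j, a + 3 * j ≤ n → ∑ l ∈ Finset.Ico a (a + 3 * j), g l ≤ 2 * j := by
  intro j
  induction j with
  | zero => simp
  | succ j ih =>
    intro hj
    rw [show a + 3 * (j + 1) = (a + 3 * j) + 3 by ring,
      ← Finset.sum_Ico_consecutive g (show a ≤ a + 3 * j by omega)
        (show a + 3 * j ≤ (a + 3 * j) + 3 by omega),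
      sum_triple g (a + 3 * j)]
    have h1 := h (a + 3 * j) (by omega)
    have h2 := ih (by omega)
    omega

/- ## Upper bounds -/

lemma ub0 (k : ℕ) (f : ℕ → Fin 3) (hf : ValidSeq (3 * k) f) :
    maroonCount (3 * k) f ≤ 2 * k := by
  rw [maroonCount_eq_sum, Finset.range_eq_Ico]
  have := blocksum (ind f) 0 (3 * k)
    (fun l hl => triple_le f (hf.1 l hl)) k (by omega)
  simpa using this

lemma ub2 (k : ℕ) (f : ℕ → Fin 3) (hf : ValidSeq (3 * k + 2) f) :
    maroonCount (3 * k + 2) f ≤ 2 * k + 1 := by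
  rw [maroonCount_eq_sum, Finset.range_eq_Ico,
    ← Finset.sum_Ico_consecutive (ind f) (show (0:ℕ) ≤ 2 by omega)
      (show 2 ≤ 3 * k + 2 by omega)]
  have hfront : ind f 0 + ind f 1 ≤ 1 := pair_le f (hf.2.1 (by omega))
  have hmid := blocksum (ind f) 2 (3 * k + 2)
    (fun l hl => triple_le f (hf.1 l hl)) k (by omega)
  rw [show 2 + 3 * k = 3 * k + 2 by ring] at hmid
  have e2 : ∑ l ∈ Finset.Ico 0 2, ind f l = ind f 0 + ind f 1 := by
    simpa using sum_pair (ind f) 0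
  omega

lemma ub1 (k : ℕ) (f : ℕ → Fin 3) (hf : ValidSeq (3 * k + 1) f) :
    maroonCount (3 * k + 1) f ≤ 2 * k := by
  rcases k with _ | m
  · -- n = 1
    rw [maroonCount_eq_sum]
    simp only [Nat.mul_zero, Nat.zero_add, Finset.sum_range_one]
    have h0 : f 0 ≠ 0 := by
      intro h
      rcases hf.2.2.2 0 (by omega) h with ⟨h1, _⟩ | ⟨h1, _⟩ <;> omega
    simp [ind, h0]
  · have e : 3 * (m + 1) + 1 = 3 * m + 4 := by ring
    rw [e] at hf ⊢
    rw [maroonCount_eq_sum, Finset.range_eq_Ico,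
      ← Finset.sum_Ico_consecutive (ind f) (show (0:ℕ) ≤ 3 * m + 2 by omega)
        (show 3 * m + 2 ≤ 3 * m + 4 by omega),
      ← Finset.sum_Ico_consecutive (ind f) (show (0:ℕ) ≤ 2 by omega)
        (show 2 ≤ 3 * m + 2 by omega)]
    have hfront : ind f 0 + ind f 1 ≤ 1 := pair_le f (hf.2.1 (by omega))
    have e2 : ∑ l ∈ Finset.Ico 0 2, ind f l = ind f 0 + ind f 1 := by
      simpa using sum_pair (ind f) 0
    have hmid := blocksum (ind f) 2 (3 * m + 4)
      (fun l hl => triple_le f (hf.1 l hl)) m (by omega)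
    rw [show 2 + 3 * m = 3 * m + 2 by ring] at hmid
    have hlastpair := pair_le f (hf.2.2.1 (by omega))
    simp only [show 3 * m + 4 - 2 = 3 * m + 2 by omega,
      show 3 * m + 4 - 1 = 3 * m + 3 by omega] at hlastpair
    have e3 : ∑ l ∈ Finset.Ico (3 * m + 2) (3 * m + 4), ind f l
        = ind f (3 * m + 2) + ind f (3 * m + 3) := by
      have := sum_pair (ind f) (3 * m + 2)
      rwa [show 3 * m + 2 + 2 = 3 * m + 4 by ring,
        show 3 * m + 2 + 1 = 3 * m + 3 by ring] at this
    omega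

/- ## The witness patterns -/

def pat : ℕ → Fin 3 := fun l => if l % 3 = 1 then 1 else 0

def pat' (k : ℕ) : ℕ → Fin 3 := fun l => if l % 3 = 1 ∨ l = 3 * k then 1 else 0

lemma pat_zero {l : ℕ} : pat l = 0 ↔ l % 3 ≠ 1 := by
  unfold pat; split_ifs with h <;> simp_all

lemma pat_one {l : ℕ} (h : l % 3 = 1) : pat l = 1 := by simp [pat, h]

lemma pat'_zero {k l : ℕ} : pat' k l = 0 ↔ (l % 3 ≠ 1 ∧ l ≠ 3 * k) := by
  unfold pat'; split_ifs with h
  · constructor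
    · intro h1; exact absurd h1 (by decide)
    · intro hc; rcases h with h | h
      · exact absurd h hc.1
      · exact absurd h hc.2
  · rw [not_or] at h
    simp [h.1, h.2]

lemma pat'_one {k l : ℕ} (h : l % 3 = 1 ∨ l = 3 * k) : pat' k l = 1 := by
  unfold pat'; rw [if_pos h]

lemma pat_valid0 (k : ℕ) : ValidSeq (3 * k) pat := by
  refine ⟨?_, ?_, ?_, ?_⟩
  · rintro l hl ⟨h0, h1, h2⟩
    rw [pat_zero] at h0 h1 h2; omega
  · rintro h ⟨h0, h1⟩
    rw [pat_zero] at h1; omega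
  · rintro h ⟨h0, h1⟩
    rw [pat_zero] at h0; omega
  · intro l hl h0
    rw [pat_zero] at h0
    have : l % 3 = 0 ∨ l % 3 = 2 := by omega
    rcases this with h | h
    · exact Or.inr ⟨by omega, pat_one (by omega)⟩
    · exact Or.inl ⟨by omega, pat_one (by omega)⟩

lemma pat_valid2 (k : ℕ) : ValidSeq (3 * k + 2) pat := by
  refine ⟨?_, ?_, ?_, ?_⟩
  · rintro l hl ⟨h0, h1, h2⟩
    rw [pat_zero] at h0 h1 h2; omega
  · rintro h ⟨h0, h1⟩
    rw [pat_zero] at h1; omega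
  · rintro h ⟨h0, h1⟩
    rw [pat_zero] at h1; omega
  · intro l hl h0
    rw [pat_zero] at h0
    have : l % 3 = 0 ∨ l % 3 = 2 := by omega
    rcases this with h | h
    · exact Or.inr ⟨by omega, pat_one (by omega)⟩
    · exact Or.inl ⟨by omega, pat_one (by omega)⟩

lemma pat'_valid (k : ℕ) : ValidSeq (3 * k + 1) (pat' k) := by
  refine ⟨?_, ?_, ?_, ?_⟩
  · rintro l hl ⟨h0, h1, h2⟩
    rw [pat'_zero] at h0 h1 h2; omega
  · rintro h ⟨h0, h1⟩
    rw [pat'_zero] at h1; omega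
  · rintro h ⟨h0, h1⟩
    rw [pat'_zero] at h1; omega
  · intro l hl h0
    rw [pat'_zero] at h0
    have : l % 3 = 0 ∨ l % 3 = 2 := by omega
    rcases this with h | h
    · exact Or.inr ⟨by omega, pat'_one (Or.inl (by omega))⟩
    · exact Or.inl ⟨by omega, pat'_one (Or.inl (by omega))⟩

/- ## Counting the witnesses -/

lemma count_step (p : ℕ → Prop) [DecidablePred p] (n : ℕ) :
    ((Finset.range (n + 1)).filter p).card
      = ((Finset.range n).filter p).card + if p n then 1 else 0 := by
  rw [Finset.range_add_one, Finset.filter_insert]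
  split_ifs with h
  · rw [Finset.card_insert_of_notMem (by simp)]
  · rfl

lemma count_pat : ∀ k : ℕ, ((Finset.range (3 * k)).filter fun l => pat l = 0).card = 2 * k := by
  intro k
  induction k with
  | zero => simp
  | succ k ih =>
    rw [show 3 * (k + 1) = (3 * k + 1 + 1) + 1 by ring, count_step, count_step, count_step, ih]
    have h0 : (3 * k) % 3 = 0 := by omega
    have h1 : (3 * k + 1) % 3 = 1 := by omega
    have h2 : (3 * k + 1 + 1) % 3 = 2 := by omega
    simp only [pat, h0, h1, h2]
    norm_num
    omega

lemma count0 (k : ℕ) : maroonCount (3 * k) pat = 2 * k := count_pat k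

lemma count2 (k : ℕ) : maroonCount (3 * k + 2) pat = 2 * k + 1 := by
  rw [maroonCount, show 3 * k + 2 = (3 * k + 1) + 1 from rfl, count_step, count_step, count_pat]
  have h0 : (3 * k) % 3 = 0 := by omega
  have h1 : (3 * k + 1) % 3 = 1 := by omega
  simp only [pat, h0, h1]
  norm_num

lemma count1 (k : ℕ) : maroonCount (3 * k + 1) (pat' k) = 2 * k := by
  rw [maroonCount, count_step]
  have h1 : pat' k (3 * k) = 1 := pat'_one (Or.inr rfl)
  rw [if_neg (by rw [h1]; decide)]
  have hc : ((Finset.range (3 * k)).filter fun l => pat' k l = 0)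
      = ((Finset.range (3 * k)).filter fun l => pat l = 0) := by
    apply Finset.filter_congr
    intro l hl
    have hlk : l ≠ 3 * k := by
      have := Finset.mem_range.mp hl; omega
    simp [pat, pat', hlk]
  rw [hc, count_pat]
  omega

/- ## Main theorem -/

theorem stmt_14 (k : ℕ) :
    IsGreatest {m | ∃ f, ValidSeq (3 * k) f ∧ maroonCount (3 * k) f = m} (2 * k) ∧
    IsGreatest {m | ∃ f, ValidSeq (3 * k + 1) f ∧ maroonCount (3 * k + 1) f = m} (2 * k) ∧
    IsGreatest {m | ∃ f, ValidSeq (3 * k + 2) f ∧ maroonCount (3 * k + 2) f = m} (2 * k + 1) := by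
  refine ⟨⟨⟨pat, pat_valid0 k, count0 k⟩, ?_⟩,
    ⟨⟨pat' k, pat'_valid k, count1 k⟩, ?_⟩,
    ⟨⟨pat, pat_valid2 k, count2 k⟩, ?_⟩⟩
  · rintro x ⟨f, hf, rfl⟩; exact ub0 k f hf
  · rintro x ⟨f, hf, rfl⟩; exact ub1 k f hf
  · rintro x ⟨f, hf, rfl⟩; exact ub2 k f hf
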